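/- arXiv:math/9702217 — 2 statements merged into one kernel-verified Lean document; each statement's English description precedes it below -/
import Mathlib

section
/- There exists a universal constant c > 0 such that for every n ≥ 1, the identity map Iₙ : B(ℓ₂ⁿ) → HS(ℓ₂ⁿ) satisfies π₁(Iₙ) ≤ c·n. -/
set_option maxHeartbeats 1000000
set_option synthInstance.maxHeartbeats 400000

open NormedSpace Metric

noncomputable section

/-- `T` is absolutely `p`-summing with constant `C`. -/
def PSummingWith {E F : Type*} [NormedAddCommGroup E] [NormedSpace ℂ E]
    [NormedAddCommGroup F] [NormedSpace ℂ F] (p : ℝ) (T : E →L[ℂ] F) (C : ℝ) : Prop :=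
  ∀ (n : ℕ) (v : Fin n → E) (B : ℝ),
    (∀ φ : E →L[ℂ] ℂ, ‖φ‖ ≤ 1 → (∑ i, ‖φ (v i)‖ ^ p) ^ (1/p) ≤ B) →
    (∑ i, ‖T (v i)‖ ^ p) ^ (1/p) ≤ C * B

/-- The identity map `Iₙ` from `B(ℓ₂ⁿ)` (n×n matrices with the operator norm) to `HS(ℓ₂ⁿ)`
(the same matrices with the Hilbert–Schmidt norm), realized by sending an operator on
`EuclideanSpace ℂ (Fin n)` to its matrix of entries in `EuclideanSpace ℂ (Fin n × Fin n)`. -/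
def opToHS (n : ℕ) :
    (EuclideanSpace ℂ (Fin n) →L[ℂ] EuclideanSpace ℂ (Fin n)) →L[ℂ]
      EuclideanSpace ℂ (Fin n × Fin n) :=
  LinearMap.toContinuousLinearMap
    { toFun := fun T => WithLp.toLp 2 (fun p : Fin n × Fin n => T (EuclideanSpace.single p.2 1) p.1)
      map_add' := fun T S => by ext p; simp
      map_smul' := fun c T => by ext p; simp }

namespace Pi1Aux

open Finset Complex

/-- Sign attached to a boolean. -/
def sg (b : Bool) : ℂ := if b then 1 else -1

lemma abs_sg (b : Bool) : ‖sg b‖ = 1 := by cases b <;> simp [sg]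

/-- Rademacher sum. -/
def rsum {n : ℕ} (c : Fin n → ℂ) (ε : Fin n → Bool) : ℂ := ∑ q, sg (ε q) * c q

lemma sum_pi_bool_succ {n : ℕ} (f : (Fin (n+1) → Bool) → ℝ) :
    ∑ ε : Fin (n+1) → Bool, f ε
      = (∑ ε : Fin n → Bool, f (Fin.cons true ε))
        + ∑ ε : Fin n → Bool, f (Fin.cons false ε) := by
  rw [← Fintype.sum_equiv (Fin.consEquiv fun _ => Bool)
      (fun p => f (Fin.cons p.1 p.2)) f (fun p => rfl)]
  rw [Fintype.sum_prod_type, Fintype.sum_bool]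

lemma rsum_cons {n : ℕ} (c : Fin (n+1) → ℂ) (b : Bool) (ε : Fin n → Bool) :
    rsum c (Fin.cons b ε) = sg b * c 0 + rsum (fun q => c q.succ) ε := by
  simp [rsum, Fin.sum_univ_succ]

lemma card_pi_bool (n : ℕ) : (Finset.univ : Finset (Fin n → Bool)).card = 2 ^ n := by
  simp [Finset.card_univ]

/-- Second moment of a Rademacher sum (Khintchine, exact). -/
lemma K2 : ∀ (n : ℕ) (c : Fin n → ℂ),
    ∑ ε : Fin n → Bool, normSq (rsum c ε) = 2 ^ n * ∑ q, normSq (c q)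
  | 0, c => by simp [rsum]
  | (n+1), c => by
    rw [sum_pi_bool_succ, ← Finset.sum_add_distrib]
    have step : ∀ ε : Fin n → Bool,
        normSq (rsum c (Fin.cons true ε)) + normSq (rsum c (Fin.cons false ε))
          = 2 * normSq (c 0) + 2 * normSq (rsum (fun q => c q.succ) ε) := by
      intro ε
      rw [rsum_cons, rsum_cons]
      simp only [sg, if_true, if_false, Bool.false_eq_true, one_mul, neg_one_mul]
      simp only [Complex.normSq_apply, Complex.add_re, Complex.add_im, Complex.neg_re,
        Complex.neg_im]
      ring
    rw [Finset.sum_congr rfl (fun ε _ => step ε), Finset.sum_add_distrib,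
      Finset.sum_const, card_pi_bool, ← Finset.mul_sum, K2 n (fun q => c q.succ),
      Fin.sum_univ_succ (fun q => normSq (c q))]
    push_cast [nsmul_eq_mul]
    ring

/-- Fourth moment of a Rademacher sum (Khintchine-type upper bound). -/
lemma K4 : ∀ (n : ℕ) (c : Fin n → ℂ),
    ∑ ε : Fin n → Bool, (normSq (rsum c ε)) ^ 2
      ≤ 3 * 2 ^ n * (∑ q, normSq (c q)) ^ 2
  | 0, c => by simp [rsum]
  | (n+1), c => by
    rw [sum_pi_bool_succ]
    set A0 := normSq (c 0) with hA0def
    set Q : (Fin n → Bool) → ℝ := fun ε => normSq (rsum (fun q => c q.succ) ε) with hQ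
    have step : ∀ ε : Fin n → Bool,
        normSq (rsum c (Fin.cons true ε)) ^ 2 + normSq (rsum c (Fin.cons false ε)) ^ 2
          ≤ 2 * A0 ^ 2 + 12 * A0 * Q ε + 2 * Q ε ^ 2 := by
      intro ε
      rw [rsum_cons, rsum_cons]
      simp only [sg, if_true, if_false, Bool.false_eq_true, one_mul, neg_one_mul]
      set x := c 0
      set y := rsum (fun q => c q.succ) ε
      have hQε : Q ε = normSq y := rfl
      rw [hQε, hA0def]
      simp only [Complex.normSq_apply, Complex.add_re, Complex.add_im, Complex.neg_re,
        Complex.neg_im]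
      nlinarith [sq_nonneg (x.re * y.im - x.im * y.re), sq_nonneg (x.re*y.re + x.im*y.im),
        sq_nonneg x.re, sq_nonneg x.im, sq_nonneg y.re, sq_nonneg y.im]
    have h1 : (∑ ε : Fin n → Bool, normSq (rsum c (Fin.cons true ε)) ^ 2)
        + ∑ ε : Fin n → Bool, normSq (rsum c (Fin.cons false ε)) ^ 2
        ≤ ∑ ε : Fin n → Bool, (2 * A0 ^ 2 + 12 * A0 * Q ε + 2 * Q ε ^ 2) := by
      rw [← Finset.sum_add_distrib]
      exact Finset.sum_le_sum fun ε _ => step ε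
    refine h1.trans ?_
    have hK2 : ∑ ε : Fin n → Bool, Q ε = 2 ^ n * ∑ q : Fin n, normSq (c q.succ) :=
      K2 n (fun q => c q.succ)
    have hK4 : ∑ ε : Fin n → Bool, Q ε ^ 2 ≤ 3 * 2 ^ n * (∑ q : Fin n, normSq (c q.succ)) ^ 2 :=
      K4 n (fun q => c q.succ)
    have hH : (0:ℝ) ≤ ∑ q : Fin n, normSq (c q.succ) :=
      Finset.sum_nonneg fun q _ => normSq_nonneg _
    have hA0 : (0:ℝ) ≤ A0 := normSq_nonneg _
    rw [Finset.sum_add_distrib, Finset.sum_add_distrib, Finset.sum_const, card_pi_bool,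
      ← Finset.mul_sum, ← Finset.mul_sum, hK2, nsmul_eq_mul,
      Fin.sum_univ_succ (fun q => normSq (c q))]
    push_cast
    have hpow : (2:ℝ)^(n+1) = 2 * 2^n := by ring
    rw [hpow, ← hA0def]
    nlinarith [hK4, mul_nonneg (mul_nonneg (show (0:ℝ) ≤ 2^n by positivity) hA0) hA0]

lemma le_of_sq_le_sq'' {t r : ℝ} (ht : 0 ≤ t) (hr : 0 ≤ r) (h : t ^ 2 ≤ r ^ 2) : t ≤ r := by
  nlinarith

/-- Hölder-type consequence of the second and fourth moment bounds. -/
lemma from_moments {ι : Type*} [Fintype ι] (a : ι → ℝ) (ha : ∀ i, 0 ≤ a i)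
    (M H : ℝ) (hM : 0 < M) (hH : 0 ≤ H)
    (h2 : ∑ i, a i ^ 2 = M * H)
    (h4 : ∑ i, a i ^ 4 ≤ 9 * M * H ^ 2) :
    M * Real.sqrt H ≤ 3 * ∑ i, a i := by
  have hS1 : (0:ℝ) ≤ ∑ i, a i := Finset.sum_nonneg fun i _ => ha i
  rcases eq_or_lt_of_le hH with h0 | hHpos
  · rw [← h0, Real.sqrt_zero, mul_zero]; linarith
  have cs1 : (∑ i, a i ^ 2) ^ 2 ≤ (∑ i, a i) * (∑ i, a i ^ 3) := by
    have := Finset.sum_mul_sq_le_sq_mul_sq Finset.univ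
      (fun i => Real.sqrt (a i)) (fun i => a i * Real.sqrt (a i))
    calc (∑ i, a i ^ 2) ^ 2
        = (∑ i, Real.sqrt (a i) * (a i * Real.sqrt (a i))) ^ 2 := by
          congr 1; refine Finset.sum_congr rfl fun i _ => ?_
          rw [show Real.sqrt (a i) * (a i * Real.sqrt (a i))
              = (Real.sqrt (a i) * Real.sqrt (a i)) * a i by ring,
            Real.mul_self_sqrt (ha i)]; ring
      _ ≤ (∑ i, Real.sqrt (a i) ^ 2) * ∑ i, (a i * Real.sqrt (a i)) ^ 2 := this
      _ = (∑ i, a i) * (∑ i, a i ^ 3) := by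
          congr 1
          · exact Finset.sum_congr rfl fun i _ => Real.sq_sqrt (ha i)
          · refine Finset.sum_congr rfl fun i _ => ?_
            rw [mul_pow, Real.sq_sqrt (ha i)]; ring
  have cs2 : (∑ i, a i ^ 3) ^ 2 ≤ (∑ i, a i ^ 2) * (∑ i, a i ^ 4) := by
    have := Finset.sum_mul_sq_le_sq_mul_sq Finset.univ (fun i => a i) (fun i => a i ^ 2)
    calc (∑ i, a i ^ 3) ^ 2 = (∑ i, a i * a i ^ 2) ^ 2 := by
          congr 1; exact Finset.sum_congr rfl fun i _ => by ring
      _ ≤ (∑ i, a i ^ 2) * ∑ i, (a i ^ 2) ^ 2 := this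
      _ = (∑ i, a i ^ 2) * (∑ i, a i ^ 4) := by
          congr 1; exact Finset.sum_congr rfl fun i _ => by ring
  set s := Real.sqrt H with hs
  have hs0 : 0 < s := Real.sqrt_pos.2 hHpos
  have hs2 : s ^ 2 = H := Real.sq_sqrt hH
  have hS3 : (0:ℝ) ≤ ∑ i, a i ^ 3 := Finset.sum_nonneg fun i _ => pow_nonneg (ha i) 3
  have hS3le : ∑ i, a i ^ 3 ≤ 3 * M * s ^ 3 := by
    apply le_of_sq_le_sq'' hS3 (by positivity)
    calc (∑ i, a i ^ 3) ^ 2 ≤ (∑ i, a i ^ 2) * (∑ i, a i ^ 4) := cs2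
      _ ≤ (M * H) * (9 * M * H ^ 2) := by
          rw [h2]; exact mul_le_mul_of_nonneg_left h4 (by positivity)
      _ = (3 * M * s ^ 3) ^ 2 := by rw [← hs2]; ring
  have key : (M * H) ^ 2 ≤ (∑ i, a i) * (3 * M * s ^ 3) := by
    calc (M * H) ^ 2 = (∑ i, a i ^ 2) ^ 2 := by rw [h2]
      _ ≤ (∑ i, a i) * (∑ i, a i ^ 3) := cs1
      _ ≤ (∑ i, a i) * (3 * M * s ^ 3) := mul_le_mul_of_nonneg_left hS3le hS1
  have hMs3 : (0:ℝ) < M * s ^ 3 := by positivity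
  have hmul : (M * s) * (M * s ^ 3) ≤ (3 * ∑ i, a i) * (M * s ^ 3) := by
    calc (M * s) * (M * s ^ 3) = (M * H) ^ 2 := by rw [← hs2]; ring
      _ ≤ (∑ i, a i) * (3 * M * s ^ 3) := key
      _ = (3 * ∑ i, a i) * (M * s ^ 3) := by ring
  exact le_of_mul_le_mul_right hmul hMs3

/-- The bilinear Rademacher chaos attached to a matrix. -/
def Xb {n : ℕ} (A : Fin n → Fin n → ℂ) (δ ε : Fin n → Bool) : ℂ :=
  rsum (fun q => rsum (fun p => A p q) δ) ε

lemma S2_eq (n : ℕ) (A : Fin n → Fin n → ℂ) :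
    ∑ δ : Fin n → Bool, ∑ ε : Fin n → Bool, normSq (Xb A δ ε)
      = (2 ^ n * 2 ^ n) * ∑ p, ∑ q, normSq (A p q) := by
  unfold Xb
  rw [Finset.sum_congr rfl fun δ _ => K2 n (fun q => rsum (fun p => A p q) δ),
    ← Finset.mul_sum, Finset.sum_comm,
    Finset.sum_congr rfl fun q (_ : q ∈ Finset.univ) => K2 n (fun p => A p q),
    ← Finset.mul_sum, Finset.sum_comm]
  ring

lemma B2 (n : ℕ) (A : Fin n → Fin n → ℂ) :
    ∑ δ : Fin n → Bool, (∑ q, normSq (rsum (fun p => A p q) δ)) ^ 2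
      ≤ 3 * 2 ^ n * (∑ q, ∑ p, normSq (A p q)) ^ 2 := by
  set Y : (Fin n → Bool) → Fin n → ℝ := fun δ q => normSq (rsum (fun p => A p q) δ) with hY
  set Hc : Fin n → ℝ := fun q => ∑ p, normSq (A p q) with hHc
  have hHc0 : ∀ q, 0 ≤ Hc q := fun q => Finset.sum_nonneg fun p _ => normSq_nonneg _
  have hY0 : ∀ δ q, 0 ≤ Y δ q := fun δ q => normSq_nonneg _
  have pair : ∀ q q' : Fin n, ∑ δ : Fin n → Bool, Y δ q * Y δ q'
      ≤ (3 * 2 ^ n) * (Hc q * Hc q') := by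
    intro q q'
    apply le_of_sq_le_sq'' (Finset.sum_nonneg fun δ _ => mul_nonneg (hY0 δ q) (hY0 δ q'))
      (mul_nonneg (by positivity) (mul_nonneg (hHc0 q) (hHc0 q')))
    calc (∑ δ : Fin n → Bool, Y δ q * Y δ q') ^ 2
        ≤ (∑ δ : Fin n → Bool, Y δ q ^ 2) * ∑ δ : Fin n → Bool, Y δ q' ^ 2 :=
          Finset.sum_mul_sq_le_sq_mul_sq Finset.univ _ _
      _ ≤ (3 * 2 ^ n * Hc q ^ 2) * (3 * 2 ^ n * Hc q' ^ 2) := by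
          apply mul_le_mul (K4 n _) (K4 n _)
            (Finset.sum_nonneg fun δ _ => sq_nonneg _) (by positivity)
      _ = ((3 * 2 ^ n) * (Hc q * Hc q')) ^ 2 := by ring
  calc ∑ δ : Fin n → Bool, (∑ q, Y δ q) ^ 2
      = ∑ δ : Fin n → Bool, ∑ q, ∑ q', Y δ q * Y δ q' := by
        exact Finset.sum_congr rfl fun δ _ => by rw [sq, Finset.sum_mul_sum]
    _ = ∑ q, ∑ q', ∑ δ : Fin n → Bool, Y δ q * Y δ q' := by
        rw [Finset.sum_comm]
        exact Finset.sum_congr rfl fun q _ => Finset.sum_comm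
    _ ≤ ∑ q, ∑ q', (3 * 2 ^ n) * (Hc q * Hc q') := by
        refine Finset.sum_le_sum fun q _ => Finset.sum_le_sum fun q' _ => pair q q'
    _ = 3 * 2 ^ n * (∑ q, Hc q) ^ 2 := by
        rw [sq, Finset.sum_mul_sum, Finset.mul_sum]
        exact Finset.sum_congr rfl fun q _ => by rw [Finset.mul_sum]

lemma S4_le (n : ℕ) (A : Fin n → Fin n → ℂ) :
    ∑ δ : Fin n → Bool, ∑ ε : Fin n → Bool, normSq (Xb A δ ε) ^ 2
      ≤ 9 * (2 ^ n * 2 ^ n) * (∑ p, ∑ q, normSq (A p q)) ^ 2 := by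
  have h1 : ∑ δ : Fin n → Bool, ∑ ε : Fin n → Bool, normSq (Xb A δ ε) ^ 2
      ≤ ∑ δ : Fin n → Bool, 3 * 2 ^ n * (∑ q, normSq (rsum (fun p => A p q) δ)) ^ 2 :=
    Finset.sum_le_sum fun δ _ => K4 n _
  refine h1.trans ?_
  rw [← Finset.mul_sum]
  have h2 := B2 n A
  rw [Finset.sum_comm (f := fun p q => normSq (A p q))]
  nlinarith [h2, pow_pos (show (0:ℝ) < 2 by norm_num) n]

/-- The key lower bound on the first moment of the chaos. -/
lemma sqrtH_le (n : ℕ) (A : Fin n → Fin n → ℂ) :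
    ((2:ℝ) ^ n * 2 ^ n) * Real.sqrt (∑ p, ∑ q, normSq (A p q))
      ≤ 3 * ∑ δ : Fin n → Bool, ∑ ε : Fin n → Bool, ‖Xb A δ ε‖ := by
  have hH : (0:ℝ) ≤ ∑ p, ∑ q, normSq (A p q) :=
    Finset.sum_nonneg fun p _ => Finset.sum_nonneg fun q _ => normSq_nonneg _
  have h2 : ∑ ω : (Fin n → Bool) × (Fin n → Bool), (‖Xb A ω.1 ω.2‖) ^ 2
      = (2 ^ n * 2 ^ n) * ∑ p, ∑ q, normSq (A p q) := by
    rw [Fintype.sum_prod_type, ← S2_eq]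
    exact Finset.sum_congr rfl fun δ _ => Finset.sum_congr rfl fun ε _ => Complex.sq_norm _
  have h4 : ∑ ω : (Fin n → Bool) × (Fin n → Bool), (‖Xb A ω.1 ω.2‖) ^ 4
      ≤ 9 * (2 ^ n * 2 ^ n) * (∑ p, ∑ q, normSq (A p q)) ^ 2 := by
    rw [Fintype.sum_prod_type]
    refine le_trans (le_of_eq ?_) (S4_le n A)
    refine Finset.sum_congr rfl fun δ _ => Finset.sum_congr rfl fun ε _ => ?_
    rw [show (4:ℕ) = 2 * 2 by norm_num, pow_mul, Complex.sq_norm]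
  have := from_moments (fun ω : (Fin n → Bool) × (Fin n → Bool) => ‖Xb A ω.1 ω.2‖)
    (fun ω => norm_nonneg _) ((2:ℝ) ^ n * 2 ^ n) (∑ p, ∑ q, normSq (A p q))
    (by positivity) hH h2 h4
  rwa [Fintype.sum_prod_type] at this

variable {n : ℕ}

lemma eucl_decomp (x : EuclideanSpace ℂ (Fin n)) :
    x = ∑ q, x q • EuclideanSpace.single q (1:ℂ) := by
  ext p
  rw [WithLp.ofLp_sum, Finset.sum_apply]
  simp [EuclideanSpace.single_apply]

lemma sum_abs_le (w : EuclideanSpace ℂ (Fin n)) :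
    ∑ p, ‖w p‖ ≤ Real.sqrt n * ‖w‖ := by
  have h1 : (∑ p, ‖w p‖) ^ 2 ≤ (n : ℝ) * ‖w‖ ^ 2 := by
    have := Finset.sum_mul_sq_le_sq_mul_sq Finset.univ (fun _ : Fin n => (1:ℝ))
      (fun p => ‖w p‖)
    simp only [one_mul, one_pow, Finset.sum_const, Finset.card_univ, Fintype.card_fin,
      nsmul_eq_mul, mul_one] at this
    rw [EuclideanSpace.norm_eq]
    rw [Real.sq_sqrt (Finset.sum_nonneg fun p _ => sq_nonneg _)]
    simpa using this
  have h0 : (0:ℝ) ≤ ∑ p, ‖w p‖ :=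
    Finset.sum_nonneg fun p _ => (norm_nonneg _)
  have hsq : (0:ℝ) ≤ Real.sqrt n * ‖w‖ := mul_nonneg (Real.sqrt_nonneg _) (norm_nonneg _)
  nlinarith [Real.sq_sqrt (Nat.cast_nonneg (α := ℝ) n),
    sq_nonneg (Real.sqrt n * ‖w‖ - ∑ p, ‖w p‖)]

/-- The random sign vector. -/
def uvec (ε : Fin n → Bool) : EuclideanSpace ℂ (Fin n) := WithLp.toLp 2 (fun q => sg (ε q))

lemma norm_uvec (ε : Fin n → Bool) : ‖uvec ε‖ = Real.sqrt n := by
  rw [EuclideanSpace.norm_eq]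
  simp [uvec, abs_sg]

lemma apply_uvec (T : EuclideanSpace ℂ (Fin n) →L[ℂ] EuclideanSpace ℂ (Fin n))
    (ε : Fin n → Bool) (p : Fin n) :
    T (uvec ε) p = ∑ q, sg (ε q) * (T (EuclideanSpace.single q 1) p) := by
  have hu : uvec ε = ∑ q, sg (ε q) • EuclideanSpace.single q (1:ℂ) := eucl_decomp (uvec ε)
  rw [hu, map_sum, WithLp.ofLp_sum, Finset.sum_apply]
  exact Finset.sum_congr rfl fun q _ => by rw [map_smul]; rfl

/-- The rank-one test functional, normalized to norm at most 1. -/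
def philin (n : ℕ) (δ ε : Fin n → Bool) :
    (EuclideanSpace ℂ (Fin n) →L[ℂ] EuclideanSpace ℂ (Fin n)) →ₗ[ℂ] ℂ where
  toFun := fun T => (n : ℂ)⁻¹ * ∑ p, sg (δ p) * (T (uvec ε) p)
  map_add' := fun T S => by
    simp only [ContinuousLinearMap.add_apply, PiLp.add_apply]
    rw [← mul_add, ← Finset.sum_add_distrib]
    congr 1
    exact Finset.sum_congr rfl fun p _ => by ring
  map_smul' := fun c T => by
    simp only [ContinuousLinearMap.smul_apply, PiLp.smul_apply, RingHom.id_apply,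
      smul_eq_mul]
    rw [Finset.mul_sum, Finset.mul_sum, Finset.mul_sum]
    rw [← Finset.sum_congr rfl fun p (_ : p ∈ Finset.univ) => rfl]
    ring_nf
    exact Finset.sum_congr rfl fun p _ => by ring

lemma philin_bound (hn : 1 ≤ n) (δ ε : Fin n → Bool)
    (T : EuclideanSpace ℂ (Fin n) →L[ℂ] EuclideanSpace ℂ (Fin n)) :
    ‖philin n δ ε T‖ ≤ 1 * ‖T‖ := by
  have hn0 : (0:ℝ) < n := by exact_mod_cast hn
  have h1 : ‖philin n δ ε T‖ = (n:ℝ)⁻¹ * ‖∑ p, sg (δ p) * (T (uvec ε) p)‖ := by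
    simp only [philin, LinearMap.coe_mk, AddHom.coe_mk, norm_mul,
      norm_inv, Complex.norm_natCast]
  rw [h1]
  have h2 : ‖∑ p, sg (δ p) * (T (uvec ε) p)‖ ≤ ∑ p, ‖T (uvec ε) p‖ := by
    calc ‖∑ p, sg (δ p) * (T (uvec ε) p)‖
        ≤ ∑ p, ‖sg (δ p) * (T (uvec ε) p)‖ := norm_sum_le _ _
      _ = ∑ p, ‖T (uvec ε) p‖ := Finset.sum_congr rfl fun p _ => by
          rw [norm_mul, abs_sg, one_mul]
  have h3 : ∑ p, ‖T (uvec ε) p‖ ≤ Real.sqrt n * ‖T (uvec ε)‖ := sum_abs_le _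
  have h4 : ‖T (uvec ε)‖ ≤ ‖T‖ * Real.sqrt n := by
    calc ‖T (uvec ε)‖ ≤ ‖T‖ * ‖uvec ε‖ := T.le_opNorm _
      _ = ‖T‖ * Real.sqrt n := by rw [norm_uvec]
  calc (n:ℝ)⁻¹ * ‖∑ p, sg (δ p) * (T (uvec ε) p)‖
      ≤ (n:ℝ)⁻¹ * (Real.sqrt n * (‖T‖ * Real.sqrt n)) := by
        refine mul_le_mul_of_nonneg_left ?_ (by positivity)
        exact h2.trans (h3.trans (mul_le_mul_of_nonneg_left h4 (Real.sqrt_nonneg _)))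
    _ = 1 * ‖T‖ := by
        rw [show Real.sqrt ↑n * (‖T‖ * Real.sqrt ↑n)
            = ‖T‖ * (Real.sqrt ↑n * Real.sqrt ↑n) by ring,
          Real.mul_self_sqrt (Nat.cast_nonneg n)]
        field_simp

lemma philin_X (hn : 1 ≤ n) (δ ε : Fin n → Bool)
    (T : EuclideanSpace ℂ (Fin n) →L[ℂ] EuclideanSpace ℂ (Fin n)) :
    ‖Xb (fun p q => T (EuclideanSpace.single q 1) p) δ ε‖
      = n * ‖philin n δ ε T‖ := by
  have hn0 : (0:ℝ) < n := by exact_mod_cast hn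
  have hXψ : Xb (fun p q => T (EuclideanSpace.single q 1) p) δ ε
      = ∑ p, sg (δ p) * (T (uvec ε) p) := by
    have hp : ∀ p : Fin n, sg (δ p) * (T (uvec ε) p)
        = ∑ q, sg (δ p) * (sg (ε q) * T (EuclideanSpace.single q 1) p) := fun p => by
      rw [apply_uvec, Finset.mul_sum]
    rw [Finset.sum_congr rfl fun p (_ : p ∈ Finset.univ) => hp p, Finset.sum_comm]
    unfold Xb rsum
    refine Finset.sum_congr rfl fun q _ => ?_
    rw [Finset.mul_sum]
    exact Finset.sum_congr rfl fun p _ => by ring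
  have h1 : ‖philin n δ ε T‖ = (n:ℝ)⁻¹ * ‖∑ p, sg (δ p) * (T (uvec ε) p)‖ := by
    simp only [philin, LinearMap.coe_mk, AddHom.coe_mk, norm_mul,
      norm_inv, Complex.norm_natCast]
  rw [h1, hXψ, ← mul_assoc, mul_inv_cancel₀ (ne_of_gt hn0), one_mul]

end Pi1Aux

open Pi1Aux Finset Complex in
/-- **Proposition 2 (1).**  There is a universal constant `c > 0` with
`π₁(Iₙ) ≤ c·n` for every `n ≥ 1`. -/
theorem pi_one_norm_opToHS_le :
    ∃ c > (0 : ℝ), ∀ n : ℕ, 1 ≤ n → PSummingWith 1 (opToHS n) (c * n) := by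
  refine ⟨3, by norm_num, ?_⟩
  intro n hn k v B hB
  have hn0 : (0:ℝ) < n := by exact_mod_cast hn
  rw [show (1:ℝ)/1 = 1 by norm_num]
  simp only [Real.rpow_one]
  -- the matrices of the operators
  set A : Fin k → Fin n → Fin n → ℂ := fun i p q => v i (EuclideanSpace.single q 1) p with hA
  -- Hilbert-Schmidt norms
  have hnorm : ∀ i, ‖opToHS n (v i)‖ = Real.sqrt (∑ p, ∑ q, normSq (A i p q)) := by
    intro i
    rw [EuclideanSpace.norm_eq]
    congr 1
    rw [Fintype.sum_prod_type]
    refine Finset.sum_congr rfl fun p _ => Finset.sum_congr rfl fun q _ => ?_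
    rw [show ‖(opToHS n) (v i) (p, q)‖ = ‖A i p q‖ from rfl, Complex.sq_norm]
  -- slice bound coming from the hypothesis
  have hslice : ∀ δ ε : Fin n → Bool, ∑ i, ‖Xb (A i) δ ε‖ ≤ n * B := by
    intro δ ε
    set φ := LinearMap.mkContinuous (philin n δ ε) 1 (philin_bound hn δ ε) with hφ
    have hφn : ‖φ‖ ≤ 1 := LinearMap.mkContinuous_norm_le _ zero_le_one _
    have hBφ := hB φ hφn
    rw [show (1:ℝ)/1 = 1 by norm_num] at hBφ
    simp only [Real.rpow_one] at hBφ
    have hval : ∀ i, ‖Xb (A i) δ ε‖ = n * ‖φ (v i)‖ := by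
      intro i
      have : φ (v i) = philin n δ ε (v i) := rfl
      rw [this, hA]
      exact philin_X hn δ ε (v i)
    rw [Finset.sum_congr rfl fun i _ => hval i, ← Finset.mul_sum]
    exact mul_le_mul_of_nonneg_left hBφ hn0.le
  -- main estimate
  have hM : (0:ℝ) < (2:ℝ)^n * 2^n := by positivity
  have step1 : ∀ i, ‖opToHS n (v i)‖
      ≤ ((2:ℝ)^n * 2^n)⁻¹ * (3 * ∑ δ : Fin n → Bool, ∑ ε : Fin n → Bool,
            ‖Xb (A i) δ ε‖) := by
    intro i
    rw [hnorm i, ← mul_le_mul_iff_right₀ hM, ← mul_assoc, mul_inv_cancel₀ (ne_of_gt hM), one_mul]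
    exact sqrtH_le n (A i)
  calc ∑ i, ‖opToHS n (v i)‖
      ≤ ∑ i, ((2:ℝ)^n * 2^n)⁻¹ * (3 * ∑ δ : Fin n → Bool, ∑ ε : Fin n → Bool,
            ‖Xb (A i) δ ε‖) := Finset.sum_le_sum fun i _ => step1 i
    _ = ((2:ℝ)^n * 2^n)⁻¹ * 3 * ∑ i, ∑ δ : Fin n → Bool, ∑ ε : Fin n → Bool,
            ‖Xb (A i) δ ε‖ := by
        rw [Finset.mul_sum]
        exact Finset.sum_congr rfl fun i _ => by ring
    _ = ((2:ℝ)^n * 2^n)⁻¹ * 3 * ∑ δ : Fin n → Bool, ∑ ε : Fin n → Bool,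
            ∑ i, ‖Xb (A i) δ ε‖ := by
        congr 1
        rw [Finset.sum_comm]
        exact Finset.sum_congr rfl fun δ _ => Finset.sum_comm
    _ ≤ ((2:ℝ)^n * 2^n)⁻¹ * 3 * ∑ δ : Fin n → Bool, ∑ ε : Fin n → Bool, ((n:ℝ) * B) := by
        refine mul_le_mul_of_nonneg_left ?_ (by positivity)
        exact Finset.sum_le_sum fun δ _ => Finset.sum_le_sum fun ε _ => hslice δ ε
    _ = 3 * n * B := by
        rw [Finset.sum_const, Finset.sum_const, card_pi_bool, nsmul_eq_mul, nsmul_eq_mul]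
        push_cast
        field_simp

end
end

section
/- Let H and H′ be Hilbert spaces and K : H → H′ an absolutely 2-summing operator. Then K is L₁-factorable with γ₁(K) ≤ π₂(K). -/
open NormedSpace MeasureTheory Metric

noncomputable section

universe u v

/-- The `p`-summing norm `π_p(T)`. -/
def piNorm {E F : Type*} [NormedAddCommGroup E] [NormedSpace ℂ E]
    [NormedAddCommGroup F] [NormedSpace ℂ F] (p : ℝ) (T : E →L[ℂ] F) : ℝ :=
  sInf {C | 0 ≤ C ∧ PSummingWith p T C}

namespace TwoSummingAuxNS

local notation "⟪" x ", " y "⟫" => @inner ℂ _ _ x y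

variable {ι : Type*} [MeasurableSpace ι] [MeasurableSingletonClass ι]

omit [MeasurableSingletonClass ι] in
lemma ae_count_eq {β : Type*} {f g : ι → β} (h : f =ᵐ[(Measure.count : Measure ι)] g) :
    f = g := by
  funext i
  by_contra hne
  have h0 : (Measure.count : Measure ι) {a | ¬ f a = g a} = 0 := MeasureTheory.ae_iff.mp h
  have hemp := Measure.count_eq_zero_iff.mp h0
  exact Set.eq_empty_iff_forall_notMem.mp hemp i hne

lemma memL1_count {f : ι → ℂ} (h : Summable (fun i => ‖f i‖)) :
    MemLp f 1 (Measure.count : Measure ι) :=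
  memLp_one_iff_integrable.mpr (integrable_count_iff.mpr h)

lemma toReal_eLpNorm_count {f : ι → ℂ} (h : Summable (fun i => ‖f i‖)) :
    (eLpNorm f 1 (Measure.count : Measure ι)).toReal = ∑' i, ‖f i‖ := by
  have h' : Summable (fun i => ‖f i‖₊) := by
    rw [← NNReal.summable_coe]
    simpa [coe_nnnorm] using h
  rw [eLpNorm_one_eq_lintegral_enorm, lintegral_count]
  simp only [enorm_eq_nnnorm]
  rw [← ENNReal.coe_tsum h',
    ENNReal.coe_toReal, NNReal.coe_tsum]
  simp [coe_nnnorm]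

lemma norm_toLp_count {f : ι → ℂ} (h : Summable (fun i => ‖f i‖)) :
    ‖(memL1_count h).toLp f‖ = ∑' i, ‖f i‖ := by
  rw [Lp.norm_toLp]
  exact toReal_eLpNorm_count h

lemma summable_coeFn (g : Lp ℂ 1 (Measure.count : Measure ι)) :
    Summable (fun i => ‖g i‖) :=
  integrable_count_iff.mp (memLp_one_iff_integrable.mp (Lp.memLp g))

lemma norm_coeFn (g : Lp ℂ 1 (Measure.count : Measure ι)) :
    ‖g‖ = ∑' i, ‖g i‖ := by
  rw [Lp.norm_def]
  exact toReal_eLpNorm_count (summable_coeFn g)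

/-- Cauchy–Schwarz for infinite sums of nonnegative reals. -/
lemma tsum_cs {κ : Type*} {a c : κ → ℝ} (ha : ∀ i, 0 ≤ a i) (hc : ∀ i, 0 ≤ c i)
    (hA : Summable (fun i => a i ^ 2)) (hC : Summable (fun i => c i ^ 2)) :
    Summable (fun i => a i * c i) ∧
      ∑' i, a i * c i ≤ Real.sqrt (∑' i, a i ^ 2) * Real.sqrt (∑' i, c i ^ 2) := by
  have key : ∀ s : Finset κ, ∑ i ∈ s, a i * c i ≤
      Real.sqrt (∑' i, a i ^ 2) * Real.sqrt (∑' i, c i ^ 2) := by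
    intro s
    have h1 : (∑ i ∈ s, a i * c i) ^ 2 ≤ (∑ i ∈ s, a i ^ 2) * (∑ i ∈ s, c i ^ 2) :=
      Finset.sum_mul_sq_le_sq_mul_sq s a c
    have hs1 : ∑ i ∈ s, a i ^ 2 ≤ ∑' i, a i ^ 2 := Summable.sum_le_tsum s (fun i _ => sq_nonneg _) hA
    have hs2 : ∑ i ∈ s, c i ^ 2 ≤ ∑' i, c i ^ 2 := Summable.sum_le_tsum s (fun i _ => sq_nonneg _) hC
    have hnn : 0 ≤ ∑ i ∈ s, a i * c i :=
      Finset.sum_nonneg fun i _ => mul_nonneg (ha i) (hc i)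
    calc ∑ i ∈ s, a i * c i = Real.sqrt ((∑ i ∈ s, a i * c i) ^ 2) := (Real.sqrt_sq hnn).symm
      _ ≤ Real.sqrt ((∑ i ∈ s, a i ^ 2) * (∑ i ∈ s, c i ^ 2)) := Real.sqrt_le_sqrt h1
      _ = Real.sqrt (∑ i ∈ s, a i ^ 2) * Real.sqrt (∑ i ∈ s, c i ^ 2) :=
          Real.sqrt_mul (Finset.sum_nonneg fun i _ => sq_nonneg _) _
      _ ≤ _ := mul_le_mul (Real.sqrt_le_sqrt hs1) (Real.sqrt_le_sqrt hs2)
          (Real.sqrt_nonneg _) (Real.sqrt_nonneg _)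
  have hsum : Summable (fun i => a i * c i) :=
    summable_of_sum_le (fun i => mul_nonneg (ha i) (hc i)) key
  exact ⟨hsum, Summable.tsum_le_of_sum_le hsum key⟩

end TwoSummingAuxNS


open TwoSummingAuxNS in
lemma psumming_sq_sum_le {H : Type u} [NormedAddCommGroup H] [InnerProductSpace ℂ H]
    [CompleteSpace H]
    {H' : Type v} [NormedAddCommGroup H'] [InnerProductSpace ℂ H']
    (K : H →L[ℂ] H') {w : Set H} (hon : Orthonormal ℂ ((↑) : w → H))
    {C : ℝ} (hC : PSummingWith 2 K C) (s : Finset w) :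
    ∑ i ∈ s, ‖K (i : H)‖ ^ 2 ≤ C ^ 2 := by
  classical
  set n := s.card with hn
  set v : Fin n → H := fun j => ((s.equivFin.symm j : w) : H) with hv
  have honv : Orthonormal ℂ v :=
    hon.comp (fun j => ((s.equivFin.symm j : ↥s) : w))
      (Subtype.coe_injective.comp (s.equivFin.symm.injective))
  have hB : ∀ φ : H →L[ℂ] ℂ, ‖φ‖ ≤ 1 → (∑ j, ‖φ (v j)‖ ^ (2:ℝ)) ^ (1/(2:ℝ)) ≤ 1 := by
    intro φ hφ
    set y := (InnerProductSpace.toDual ℂ H).symm φ with hy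
    have hyn : ‖y‖ ≤ 1 := by
      rw [hy, LinearIsometryEquiv.norm_map]; exact hφ
    have hbes : ∑ j, ‖(inner ℂ (v j) y : ℂ)‖ ^ 2 ≤ ‖y‖ ^ 2 := honv.sum_inner_products_le y
    have hsum1 : (∑ j, ‖φ (v j)‖ ^ (2:ℝ)) ≤ 1 := by
      have heq : ∀ j, ‖φ (v j)‖ ^ (2:ℝ) = ‖(inner ℂ (v j) y : ℂ)‖ ^ 2 := by
        intro j
        have h1 : (inner ℂ y (v j) : ℂ) = φ (v j) := by
          rw [hy]; exact InnerProductSpace.toDual_symm_apply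
        rw [show ((2:ℝ)) = ((2:ℕ):ℝ) by norm_num, Real.rpow_natCast, ← h1,
          norm_inner_symm]
      calc (∑ j, ‖φ (v j)‖ ^ (2:ℝ)) = ∑ j, ‖(inner ℂ (v j) y : ℂ)‖ ^ 2 :=
            Finset.sum_congr rfl fun j _ => heq j
        _ ≤ ‖y‖ ^ 2 := hbes
        _ ≤ 1 := pow_le_one₀ (norm_nonneg y) hyn
    exact Real.rpow_le_one (Finset.sum_nonneg fun j _ =>
      Real.rpow_nonneg (norm_nonneg _) _) hsum1 (by norm_num)
  have hmain := hC n v 1 hB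
  rw [mul_one] at hmain
  set X := ∑ j, ‖K (v j)‖ ^ (2:ℕ) with hX
  have hXr : (∑ j, ‖K (v j)‖ ^ (2:ℝ)) = X := by
    rw [hX]
    refine Finset.sum_congr rfl fun j _ => ?_
    rw [show ((2:ℝ)) = ((2:ℕ):ℝ) by norm_num, Real.rpow_natCast]
  have hX0 : 0 ≤ X := Finset.sum_nonneg fun j _ => pow_nonneg (norm_nonneg _) _
  rw [hXr] at hmain
  have hXC : X ≤ C ^ 2 := by
    have h1 : (X ^ ((1:ℝ)/2)) ^ (2:ℕ) ≤ C ^ 2 :=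
      pow_le_pow_left₀ (Real.rpow_nonneg hX0 _) hmain 2
    rwa [← Real.rpow_natCast (X ^ ((1:ℝ)/2)) 2, ← Real.rpow_mul hX0,
      (by norm_num : (1:ℝ)/2 * ((2:ℕ):ℝ) = 1), Real.rpow_one] at h1
  calc ∑ i ∈ s, ‖K (i : H)‖ ^ 2 = ∑ i : ↥s, ‖K ((i : w) : H)‖ ^ 2 :=
        (Finset.sum_coe_sort s _).symm
    _ = X := (Equiv.sum_comp s.equivFin.symm (fun i : ↥s => ‖K ((i : w) : H)‖ ^ 2)).symm
    _ ≤ C ^ 2 := hXC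

open TwoSummingAuxNS in
/-- An absolutely `2`-summing (equivalently, Hilbert–Schmidt) operator between Hilbert
spaces is `L₁`-factorable with `γ₁(K) ≤ π₂(K)`: for every `ε > 0` there is a factorization
`i ∘ K = U₂ ∘ U₁` through an `L₁(μ)`-space of cost `‖U₁‖ ‖U₂‖ ≤ π₂(K) + ε`. -/
theorem two_summing_hilbert_space_operator_L1_factorable
    {H : Type u} [NormedAddCommGroup H] [InnerProductSpace ℂ H] [CompleteSpace H]
    {H' : Type v} [NormedAddCommGroup H'] [InnerProductSpace ℂ H'] [CompleteSpace H']
    (K : H →L[ℂ] H') (hK : ∃ C, 0 ≤ C ∧ PSummingWith 2 K C) :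
    ∀ ε > (0 : ℝ),
      ∃ (Ω : Type u) (_ : MeasurableSpace Ω) (μ : Measure Ω)
        (U₁ : H →L[ℂ] Lp ℂ 1 μ)
        (U₂ : Lp ℂ 1 μ →L[ℂ] StrongDual ℂ (StrongDual ℂ H')),
        (∀ x, U₂ (U₁ x) = NormedSpace.inclusionInDoubleDual ℂ H' (K x)) ∧
        ‖U₁‖ * @Norm.norm _ (ContinuousLinearMap.hasOpNorm (𝕜 := ℂ) (𝕜₂ := ℂ) (E := Lp ℂ 1 μ)
          (F := StrongDual ℂ (StrongDual ℂ H')) (σ₁₂ := RingHom.id ℂ)) U₂ ≤ piNorm 2 K + ε := by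
  intro ε hε
  classical
  obtain ⟨w, b, hb⟩ := exists_hilbertBasis ℂ H
  have hon : Orthonormal ℂ ((↑) : w → H) := hb ▸ b.orthonormal
  obtain ⟨C₀, hC₀0, hC₀⟩ := hK
  have hsq : Summable (fun i : w => ‖K (i : H)‖ ^ 2) :=
    summable_of_sum_le (fun i => sq_nonneg _) (psumming_sq_sum_le K hon hC₀)
  set σ := Real.sqrt (∑' i : w, ‖K (i : H)‖ ^ 2) with hσ
  have hσ0 : 0 ≤ σ := Real.sqrt_nonneg _
  have hσpi : σ ≤ piNorm 2 K := by
    refine le_csInf ⟨C₀, hC₀0, hC₀⟩ ?_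
    rintro C ⟨hC0, hC⟩
    have h1 : (∑' i : w, ‖K (i : H)‖ ^ 2) ≤ C ^ 2 :=
      Summable.tsum_le_of_sum_le hsq (psumming_sq_sum_le K hon hC)
    calc σ ≤ Real.sqrt (C ^ 2) := Real.sqrt_le_sqrt h1
      _ = C := Real.sqrt_sq hC0
  letI : MeasurableSpace ↥w := ⊤
  haveI : MeasurableSingletonClass ↥w := ⟨fun _ => MeasurableSpace.measurableSet_top⟩
  set F : H → ↥w → ℂ := fun x i => (‖K (i : H)‖ : ℂ) * (inner ℂ (i : H) x : ℂ) with hF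
  have hFs : ∀ x : H, Summable (fun i => ‖F x i‖) ∧ (∑' i, ‖F x i‖) ≤ σ * ‖x‖ := by
    intro x
    have hc2 : Summable (fun i : w => ‖(inner ℂ (i : H) x : ℂ)‖ ^ 2) :=
      hon.inner_products_summable x
    have heq : (fun i : ↥w => ‖F x i‖) =
        fun i : ↥w => ‖K (i : H)‖ * ‖(inner ℂ (i : H) x : ℂ)‖ := by
      funext i
      simp only [hF, norm_mul, Complex.norm_real, Real.norm_eq_abs,
        abs_of_nonneg (norm_nonneg (K (i : H)))]
    obtain ⟨hs, hle⟩ := tsum_cs (fun i : w => norm_nonneg (K (i : H)))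
      (fun i : w => norm_nonneg _) hsq hc2
    refine ⟨by rw [heq]; exact hs, ?_⟩
    rw [heq]
    refine hle.trans ?_
    rw [← hσ]
    refine mul_le_mul_of_nonneg_left ?_ hσ0
    calc Real.sqrt (∑' i : w, ‖(inner ℂ (i : H) x : ℂ)‖ ^ 2) ≤ Real.sqrt (‖x‖ ^ 2) :=
        Real.sqrt_le_sqrt (hon.tsum_inner_products_le x)
      _ = ‖x‖ := Real.sqrt_sq (norm_nonneg _)
  set U₁lin : H →ₗ[ℂ] Lp ℂ 1 (Measure.count : Measure ↥w) :=
    { toFun := fun x => ((memL1_count (hFs x).1).toLp (F x))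
      map_add' := by
        intro x y
        have hFe : F (x + y) = F x + F y := by
          funext i
          simp only [hF, Pi.add_apply, inner_add_right, mul_add]
        show (memL1_count (hFs (x + y)).1).toLp (F (x + y))
            = (memL1_count (hFs x).1).toLp (F x) + (memL1_count (hFs y).1).toLp (F y)
        exact (MemLp.toLp_congr (memL1_count (hFs (x + y)).1)
          ((memL1_count (hFs x).1).add (memL1_count (hFs y).1))
          (Filter.EventuallyEq.of_eq hFe)).trans
          (MemLp.toLp_add (memL1_count (hFs x).1) (memL1_count (hFs y).1))
      map_smul' := by
        intro c x
        have hFe : F (c • x) = c • F x := by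
          funext i
          simp only [hF, Pi.smul_apply, inner_smul_right, smul_eq_mul]
          ring
        show (memL1_count (hFs (c • x)).1).toLp (F (c • x))
            = c • (memL1_count (hFs x).1).toLp (F x)
        exact (MemLp.toLp_congr (memL1_count (hFs (c • x)).1)
          ((memL1_count (hFs x).1).const_smul c)
          (Filter.EventuallyEq.of_eq hFe)).trans
          (MemLp.toLp_const_smul c (memL1_count (hFs x).1)) } with hU₁lin
  have hU₁bound : ∀ x, ‖U₁lin x‖ ≤ σ * ‖x‖ := by
    intro x
    rw [show U₁lin x = (memL1_count (hFs x).1).toLp (F x) from rfl,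
      norm_toLp_count (hFs x).1]
    exact (hFs x).2
  set U₁ : H →L[ℂ] Lp ℂ 1 (Measure.count : Measure ↥w) :=
    U₁lin.mkContinuous σ hU₁bound with hU₁
  set g : ↥w → StrongDual ℂ (StrongDual ℂ H') :=
    fun i => NormedSpace.inclusionInDoubleDual ℂ H'
      (((‖K (i : H)‖ : ℂ)⁻¹) • K (i : H)) with hg
  have hg1 : ∀ i, ‖g i‖ ≤ 1 := by
    intro i
    by_cases hz : ‖K (i : H)‖ = 0
    · have h0 : K (i : H) = 0 := norm_eq_zero.mp hz
      rw [hg]; simp only [h0, smul_zero, map_zero]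
      exact ContinuousLinearMap.opNorm_zero.le.trans zero_le_one
    · have hn : ‖((‖K (i : H)‖ : ℂ)⁻¹) • K (i : H)‖ = 1 := by
        rw [norm_smul, norm_inv, Complex.norm_real, Real.norm_eq_abs,
          abs_of_nonneg (norm_nonneg _), inv_mul_cancel₀ hz]
      calc ‖g i‖ ≤ ‖((‖K (i : H)‖ : ℂ)⁻¹) • K (i : H)‖ :=
            NormedSpace.double_dual_bound ℂ H' _
        _ = 1 := hn
  haveI : ContinuousAdd (StrongDual ℂ (StrongDual ℂ H')) := ContinuousLinearMap.topologicalAddGroup.toContinuousAdd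
  have hsmul_le : ∀ (f : Lp ℂ 1 (Measure.count : Measure ↥w)) (i : ↥w),
      ‖(f : ↥w → ℂ) i • g i‖ ≤ ‖(f : ↥w → ℂ) i‖ := by
    intro f i
    refine (ContinuousLinearMap.opNorm_smul_le _ _).trans ?_
    calc ‖(f : ↥w → ℂ) i‖ * ‖g i‖ ≤ ‖(f : ↥w → ℂ) i‖ * 1 :=
        mul_le_mul_of_nonneg_left (hg1 i) (norm_nonneg _)
      _ = _ := mul_one _
  have hgsum : ∀ f : Lp ℂ 1 (Measure.count : Measure ↥w),
      Summable (fun i => (f : ↥w → ℂ) i • g i) := by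
    intro f
    exact Summable.of_norm_bounded (E := StrongDual ℂ (StrongDual ℂ H'))
      (summable_coeFn f) (hsmul_le f)
  set U₂lin : Lp ℂ 1 (Measure.count : Measure ↥w) →ₗ[ℂ]
      StrongDual ℂ (StrongDual ℂ H') :=
    { toFun := fun f => ∑' i, (f : ↥w → ℂ) i • g i
      map_add' := by
        intro f f'
        have hcoe : ((f + f' : Lp ℂ 1 (Measure.count : Measure ↥w)) : ↥w → ℂ)
            = (f : ↥w → ℂ) + (f' : ↥w → ℂ) := ae_count_eq (Lp.coeFn_add f f')
        simp only [hcoe, Pi.add_apply]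
        rw [← Summable.tsum_add (hgsum f) (hgsum f')]
        exact tsum_congr fun i => add_smul (M := StrongDual ℂ (StrongDual ℂ H')) _ _ _
      map_smul' := by
        intro c f
        have hcoe : ((c • f : Lp ℂ 1 (Measure.count : Measure ↥w)) : ↥w → ℂ)
            = c • (f : ↥w → ℂ) := ae_count_eq (Lp.coeFn_smul c f)
        simp only [hcoe, RingHom.id_apply]
        rw [show (fun i => (c • (f : ↥w → ℂ)) i • g i)
            = fun i => c • ((f : ↥w → ℂ) i • g i) from
          funext fun i => by simp [smul_smul]]
        exact Summable.tsum_const_smul c (hgsum f) } with hU₂lin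
  have hU₂bound : ∀ f, @Norm.norm (StrongDual ℂ (StrongDual ℂ H')) SeminormedAddGroup.toNorm
      (U₂lin f) ≤ 1 * ‖f‖ := by
    intro f
    rw [one_mul, norm_coeFn f, show U₂lin f = ∑' i, (f : ↥w → ℂ) i • g i from rfl]
    have hns : Summable fun i => ‖(f : ↥w → ℂ) i • g i‖ :=
      Summable.of_nonneg_of_le (fun i => ContinuousLinearMap.opNorm_nonneg _) (hsmul_le f) (summable_coeFn f)
    have h := norm_tsum_le_tsum_norm (E := StrongDual ℂ (StrongDual ℂ H')) hns
    exact h.trans (Summable.tsum_le_tsum (hsmul_le f) hns (summable_coeFn f))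
  set U₂ := LinearMap.mkContinuous (𝕜 := ℂ) (𝕜₂ := ℂ) (E := Lp ℂ 1 (Measure.count : Measure ↥w))
    (F := StrongDual ℂ (StrongDual ℂ H')) (σ := RingHom.id ℂ) U₂lin 1 hU₂bound with hU₂
  refine ⟨↥w, inferInstance, Measure.count, U₁, U₂, ?_, ?_⟩
  · intro x
    have hU₁x : ((U₁ x : Lp ℂ 1 (Measure.count : Measure ↥w)) : ↥w → ℂ) = F x := by
      rw [hU₁, LinearMap.mkContinuous_apply]
      exact ae_count_eq ((memL1_count (hFs x).1).coeFn_toLp)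
    have h1 : HasSum (fun i : ↥w => (inner ℂ (i : H) x : ℂ) • (i : H)) x := by
      have hbi : ∀ i : ↥w, b i = (i : H) := fun i => congrFun hb i
      have h0 := b.hasSum_repr x
      simp only [b.repr_apply_apply, hbi] at h0
      exact h0
    have h2 := (h1.mapL K).mapL (NormedSpace.inclusionInDoubleDual ℂ H')
    have h3 : (fun i : ↥w => F x i • g i) = fun i : ↥w =>
        NormedSpace.inclusionInDoubleDual ℂ H' (K ((inner ℂ (i : H) x : ℂ) • (i : H))) := by
      funext i
      by_cases hz : ‖K (i : H)‖ = 0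
      · have hK0 : K (i : H) = 0 := norm_eq_zero.mp hz
        simp [hg, hF, hz, hK0]
        exact ContinuousLinearMap.ext fun _ => by simp
      · have hzc : ((‖K (i : H)‖ : ℂ)) ≠ 0 := by
          exact_mod_cast Complex.ofReal_ne_zero.mpr hz
        simp only [hg, hF, ContinuousLinearMap.map_smul]
        rw [smul_smul, mul_comm ((‖K (i : H)‖ : ℂ)) (inner ℂ (i : H) x : ℂ), mul_assoc,
          mul_inv_cancel₀ hzc, mul_one]
    have h4 : HasSum (fun i : ↥w => F x i • g i)
        (NormedSpace.inclusionInDoubleDual ℂ H' (K x)) := by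
      rw [h3]
      exact h2
    calc U₂ (U₁ x) = ∑' i, ((U₁ x : Lp ℂ 1 (Measure.count : Measure ↥w)) : ↥w → ℂ) i • g i := by
          rw [hU₂, LinearMap.mkContinuous_apply]; rfl
      _ = ∑' i, F x i • g i := by rw [hU₁x]
      _ = _ := h4.tsum_eq
  · have hn1 : ‖U₁‖ ≤ σ := LinearMap.mkContinuous_norm_le _ hσ0 _
    have hn2 : @Norm.norm _ (ContinuousLinearMap.hasOpNorm (𝕜 := ℂ) (𝕜₂ := ℂ)
        (E := Lp ℂ 1 (Measure.count : Measure ↥w)) (F := StrongDual ℂ (StrongDual ℂ H'))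
        (σ₁₂ := RingHom.id ℂ)) U₂ ≤ 1 := LinearMap.mkContinuous_norm_le _ zero_le_one _
    calc ‖U₁‖ * @Norm.norm _ (ContinuousLinearMap.hasOpNorm (𝕜 := ℂ) (𝕜₂ := ℂ)
        (E := Lp ℂ 1 (Measure.count : Measure ↥w)) (F := StrongDual ℂ (StrongDual ℂ H'))
        (σ₁₂ := RingHom.id ℂ)) U₂ ≤ σ * 1 :=
        mul_le_mul hn1 hn2 (ContinuousLinearMap.opNorm_nonneg _) hσ0
      _ = σ := mul_one σ
      _ ≤ piNorm 2 K + ε := hσpi.trans (le_add_of_nonneg_right hε.le)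


end
end
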